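/- (Conditional form of Corollary 4.3.) Under the same setting and hypotheses as the conditional form of Theorem 4.1, assume additionally that α/(βN) − γM/δ > 0. Then there exist positive constants ε₀, m, M₂ such that for all ε ∈ (0, ε₀) and all t ∈ [0,T]: ‖x^ε(t) − X(t)‖²_{L²(Ω)} ≤ e^{−m t} ( ‖x^ε(0) − X(0)‖²_{L²(Ω)} + ε M₂ ). -/

import Mathlib

open MeasureTheory Real Filter

lemma slope_le_of_deriv_le {g : ℝ → ℝ} (hg : Differentiable ℝ g) {c : ℝ}
    (hd : ∀ x, deriv g x ≤ c) {a b : ℝ} (hab : a ≤ b) : g b - g a ≤ c * (b - a) := by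
  have hdiff : Differentiable ℝ (fun x => g x - c * x) := hg.sub (by fun_prop)
  have h : Antitone (fun x => g x - c * x) := by
    apply antitone_of_deriv_nonpos hdiff
    intro x
    have : deriv (fun x => g x - c * x) x = deriv g x - c := by
      have h2 : HasDerivAt (fun x : ℝ => c * x) c x := by
        simpa [mul_comm] using (hasDerivAt_id x).const_mul c
      rw [deriv_fun_sub (hg x) h2.differentiableAt, h2.deriv]
    rw [this]; linarith [hd x]
  have := h hab
  simp only [] at this
  linarith

lemma one_sided_lip {g : ℝ → ℝ} (hg : Differentiable ℝ g) {α : ℝ}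
    (hd : ∀ x, deriv g x ≤ -α) (a b : ℝ) :
    (a - b) * (g a - g b) ≤ -α * (a - b) ^ 2 := by
  rcases le_total a b with h | h
  · have := slope_le_of_deriv_le hg hd h
    nlinarith [this, sq_nonneg (a - b)]
  · have := slope_le_of_deriv_le hg hd h
    nlinarith [this, sq_nonneg (a - b)]

lemma lip_of_deriv_bounds {g : ℝ → ℝ} (hg : Differentiable ℝ g) {L : ℝ}
    (h0 : ∀ x, 0 ≤ deriv g x) (h1 : ∀ x, deriv g x ≤ L) (a b : ℝ) :
    |g a - g b| ≤ L * |a - b| := by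
  have hm : Monotone g := monotone_of_deriv_nonneg hg h0
  rcases le_total a b with h | h
  · have h2 := slope_le_of_deriv_le hg h1 h
    have h3 := hm h
    rw [abs_sub_comm, abs_of_nonneg (by linarith), abs_sub_comm, abs_of_nonneg (by linarith)]
    linarith
  · have h2 := slope_le_of_deriv_le hg h1 h
    have h3 := hm h
    rw [abs_of_nonneg (by linarith), abs_of_nonneg (by linarith)]
    linarith

lemma integrable_of_bound' {X : Type*} [MeasurableSpace X] {μ : Measure X} [IsFiniteMeasure μ]
    {g : X → ℝ} (hm : AEStronglyMeasurable g μ) (C : ℝ) (hC : ∀ᵐ a ∂μ, |g a| ≤ C) :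
    Integrable g μ :=
  Integrable.mono' (integrable_const C) hm (by simpa [Real.norm_eq_abs] using hC)

lemma integral_exp_mul (c : ℝ) (hc : c ≠ 0) (t : ℝ) :
    ∫ s in (0:ℝ)..t, Real.exp (c * s) = (Real.exp (c * t) - 1) / c := by
  have h : ∀ x ∈ Set.uIcc (0:ℝ) t, HasDerivAt (fun s => Real.exp (c * s) / c)
      (Real.exp (c * x)) x := by
    intro x _
    have : HasDerivAt (fun s => Real.exp (c * s)) (Real.exp (c * x) * c) x := by
      simpa [mul_comm] using HasDerivAt.exp ((hasDerivAt_id x).const_mul c)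
    simpa [mul_div_assoc, mul_div_cancel_right₀ _ hc] using this.div_const c
  have := intervalIntegral.integral_eq_sub_of_hasDerivAt h
    ((Real.continuous_exp.comp (continuous_const.mul continuous_id)).intervalIntegrable 0 t)
  simp only [mul_zero, Real.exp_zero] at this
  rw [this]; ring

lemma pointwise_est {al bN gmd lam K : ℝ} (hbN : 0 < bN)
    (hlamdef : lam = al - bN * gmd) (hlampos : 0 < lam) (hKdef : K = bN ^ 2 / lam)
    {a b e F1 F2 F3 : ℝ}
    (h1 : (a - b) * (F1 - F2) ≤ -al * (a - b) ^ 2)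
    (h2 : |F2 - F3| ≤ bN * (gmd * |a - b| + |e|)) :
    2 * (a - b) * (F1 - F3) ≤ -lam * (a - b) ^ 2 + K * e ^ 2 := by
  have hKl : K * lam = bN ^ 2 := by rw [hKdef]; field_simp
  have h4 : (a - b) * (F2 - F3) ≤ bN * gmd * (a - b) ^ 2 + bN * (|a - b| * |e|) := by
    calc (a - b) * (F2 - F3) ≤ |(a - b) * (F2 - F3)| := le_abs_self _
      _ = |a - b| * |F2 - F3| := abs_mul _ _
      _ ≤ |a - b| * (bN * (gmd * |a - b| + |e|)) :=
          mul_le_mul_of_nonneg_left h2 (abs_nonneg _)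
      _ = bN * gmd * |a - b| ^ 2 + bN * (|a - b| * |e|) := by ring
      _ = bN * gmd * (a - b) ^ 2 + bN * (|a - b| * |e|) := by rw [sq_abs]
  have hy : 2 * bN * (|a - b| * |e|) ≤ lam * (a - b) ^ 2 + K * e ^ 2 := by
    have hsq := sq_nonneg (lam * |a - b| - bN * |e|)
    have hE2 : bN ^ 2 * |e| ^ 2 = bN ^ 2 * e ^ 2 := by rw [sq_abs]
    have hX2 : lam ^ 2 * |a - b| ^ 2 = lam ^ 2 * (a - b) ^ 2 := by rw [sq_abs]
    have hKl2 : K * lam * e ^ 2 = bN ^ 2 * e ^ 2 := by rw [hKl]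
    rw [← mul_le_mul_iff_right₀ hlampos]
    nlinarith only [hsq, hE2, hX2, hKl2]
  have h7 : bN * gmd * (a - b) ^ 2 = (al - lam) * (a - b) ^ 2 := by rw [hlamdef]; ring
  linarith only [h1, h4, hy, h7]


set_option maxHeartbeats 2000000 in
theorem stmt9 (n : ℕ) (Ω : Set (Fin n → ℝ)) (hΩm : MeasurableSet Ω)
    (hΩb : Bornology.IsBounded Ω) (hΩpos : 0 < volume Ω) (hΩfin : volume Ω < ⊤)
    (J : (Fin n → ℝ) → ℝ) (hJc : Continuous J) (CJ : ℝ) (hJbd : ∀ z, |J z| ≤ CJ)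
    (hJnn : ∀ z, 0 ≤ J z) (hJsym : ∀ z, J (-z) = J z)
    (hJint : Integrable J) (hJ1 : ∫ z, J z = 1)
    (α β γ M N δ T D₀ D₁ : ℝ) (hα : 0 < α) (hβ : 0 < β) (hγ : 0 < γ)
    (hM : 0 < M) (hN : 0 < N) (hδ : 0 < δ) (hT : 0 < T) (hD₀ : 0 < D₀) (hD₁ : 0 < D₁)
    (f : ℝ → ℝ → ℝ) (hf : ContDiff ℝ 1 (fun p : ℝ × ℝ => f p.1 p.2))
    (hfx : ∀ a b : ℝ, deriv (fun s => f s b) a ≤ -α)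
    (hfy : ∀ a b : ℝ, 0 ≤ deriv (fun s => f a s) b ∧ deriv (fun s => f a s) b ≤ β * N)
    (m : ℝ → ℝ) (hmC : ContDiff ℝ 1 m)
    (hm' : ∀ a : ℝ, 0 ≤ deriv m a ∧ deriv m a ≤ γ * M / δ)
    -- the family of solutions x^ε, η^ε and the limit solution X
    (xe ηe : ℝ → ℝ → (Fin n → ℝ) → ℝ) (X : ℝ → (Fin n → ℝ) → ℝ)
    (hXc : Continuous (fun p : ℝ × (Fin n → ℝ) => X p.1 p.2))
    (hXb : ∃ C : ℝ, ∀ t u, |X t u| ≤ C)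
    (hXeq : ∀ t ∈ Set.Icc (0 : ℝ) T, ∀ u ∈ Ω,
      HasDerivWithinAt (fun s => X s u)
        (f (X t u) (m (X t u)) + ∫ v in Ω, J (u - v) * (X t v - X t u))
        (Set.Icc 0 T) t)
    (hxc : ∀ ε > (0 : ℝ), Continuous (fun p : ℝ × (Fin n → ℝ) => xe ε p.1 p.2))
    (hηc : ∀ ε > (0 : ℝ), Continuous (fun p : ℝ × (Fin n → ℝ) => ηe ε p.1 p.2))
    (hxb : ∀ ε > (0 : ℝ), ∃ C : ℝ, ∀ t u, |xe ε t u| ≤ C ∧ |ηe ε t u| ≤ C)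
    (hxeq : ∀ ε > (0 : ℝ), ∀ t ∈ Set.Icc (0 : ℝ) T, ∀ u ∈ Ω,
      HasDerivWithinAt (fun s => xe ε s u)
        (f (xe ε t u) (m (xe ε t u) + ηe ε t u) +
          ∫ v in Ω, J (u - v) * (xe ε t v - xe ε t u))
        (Set.Icc 0 T) t)
    -- bounded time-derivatives
    (hder : ∀ ε > (0 : ℝ), ∃ Cd : ℝ, ∀ t ∈ Set.Icc (0 : ℝ) T, ∀ u ∈ Ω,
      |f (xe ε t u) (m (xe ε t u) + ηe ε t u) +
        ∫ v in Ω, J (u - v) * (xe ε t v - xe ε t u)| ≤ Cd ∧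
      |f (X t u) (m (X t u)) + ∫ v in Ω, J (u - v) * (X t v - X t u)| ≤ Cd)
    -- the decay estimate for η^ε
    (hηdec : ∀ ε > (0 : ℝ), ∀ t ∈ Set.Icc (0 : ℝ) T,
      (∫ u in Ω, (ηe ε t u) ^ 2) ≤
        ε / δ * (ε / (2 * δ) * D₀ ^ 2 + D₁) * (1 - Real.exp (-t * δ / ε)) +
          Real.exp (-t * δ / ε) * ∫ u in Ω, (ηe ε 0 u) ^ 2)
    -- ‖η^ε(0)‖_{L²} uniformly bounded in ε
    (B : ℝ) (hB : ∀ ε > (0 : ℝ), Real.sqrt (∫ u in Ω, (ηe ε 0 u) ^ 2) ≤ B)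
    -- the additional assumption of Corollary 4.3
    (hadd : 0 < α / (β * N) - γ * M / δ) :
    ∃ ε₀ m₀ M₂ : ℝ, 0 < ε₀ ∧ 0 < m₀ ∧ 0 < M₂ ∧
      ∀ ε : ℝ, 0 < ε → ε < ε₀ → ∀ t ∈ Set.Icc (0 : ℝ) T,
        (∫ u in Ω, (xe ε t u - X t u) ^ 2) ≤
          Real.exp (-m₀ * t) * ((∫ u in Ω, (xe ε 0 u - X 0 u) ^ 2) + ε * M₂) := by
  classical
  obtain ⟨CX, hCX⟩ := hXb
  have hβN : 0 < β * N := mul_pos hβ hN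
  set lam : ℝ := α - β * N * (γ * M / δ) with hlamdef
  have hlam : 0 < lam := by
    have h1 : γ * M / δ * (β * N) < α := by
      have hx1 := (lt_div_iff₀ hβN).mp (by linarith only [hadd] : γ * M / δ < α / (β * N))
      linarith only [hx1]
    have : β * N * (γ * M / δ) = γ * M / δ * (β * N) := by ring
    simp only [hlamdef]; linarith only [h1, this]
  set K : ℝ := (β * N) ^ 2 / lam with hKdef
  have hK : 0 < K := by positivity
  set A : ℝ := (D₀ ^ 2 / (2 * δ) + D₁) / δ with hAdef
  have hA : 0 < A := by positivity
  have hB0 : 0 ≤ B := le_trans (Real.sqrt_nonneg _) (hB 1 one_pos)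
  clear_value lam K A
  refine ⟨min 1 (δ / (2 * lam)), lam, Real.exp (lam * T) * K * A / lam + 2 * K * B ^ 2 / δ + 1,
    lt_min one_pos (by positivity), hlam, by positivity, ?_⟩
  intro ε hε hεlt t ht
  obtain ⟨Cx, hCx⟩ := hxb ε hε
  obtain ⟨Cd, hCd⟩ := hder ε hε
  haveI : IsFiniteMeasure (volume.restrict Ω) :=
    ⟨by rwa [Measure.restrict_apply_univ]⟩
  set Cw : ℝ := Cx + CX with hCwdef
  have hCwnn : 0 ≤ Cw := by
    have h1 := (hCx 0 0).1; have h2 := hCX 0 0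
    have := abs_nonneg (xe ε 0 0); have := abs_nonneg (X 0 0)
    simp only [hCwdef]; linarith only [h1, h2, abs_nonneg (xe ε 0 0), abs_nonneg (X 0 0)]
  have hw_bd : ∀ s u, |xe ε s u - X s u| ≤ Cw := fun s u => by
    calc |xe ε s u - X s u| ≤ |xe ε s u| + |X s u| := abs_sub _ _
    _ ≤ Cw := add_le_add (hCx s u).1 (hCX s u)
  have hwcont : Continuous (fun p : ℝ × (Fin n → ℝ) => xe ε p.1 p.2 - X p.1 p.2) :=
    (hxc ε hε).sub hXc
  have hCJ0 : 0 ≤ CJ := le_trans (abs_nonneg _) (hJbd 0)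
  have hxet : ∀ s : ℝ, Continuous fun u => xe ε s u :=
    fun s => (hxc ε hε).comp (Continuous.prodMk_right s)
  have hXt : ∀ s : ℝ, Continuous fun u => X s u :=
    fun s => hXc.comp (Continuous.prodMk_right s)
  have hηt : ∀ s : ℝ, Continuous fun u => ηe ε s u :=
    fun s => (hηc ε hε).comp (Continuous.prodMk_right s)
  have hwt : ∀ s : ℝ, Continuous fun u => xe ε s u - X s u :=
    fun s => (hxet s).sub (hXt s)
  have hJcont_int : ∀ (k : (Fin n → ℝ) → ℝ), Continuous k → ∀ Ck : ℝ, (∀ u, |k u| ≤ Ck) →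
      Continuous (fun u : Fin n → ℝ => ∫ v in Ω, J (u - v) * (k v - k u)) := by
    intro k hk Ck hCk
    apply continuous_of_dominated (bound := fun _ => CJ * (Ck + Ck))
    · intro u
      exact ((hJc.comp (continuous_const.sub continuous_id)).mul
        (hk.sub continuous_const)).aestronglyMeasurable
    · intro u
      filter_upwards with v
      rw [Real.norm_eq_abs, abs_mul]
      exact mul_le_mul (hJbd _) ((abs_sub _ _).trans (add_le_add (hCk v) (hCk u)))
        (abs_nonneg _) hCJ0
    · exact integrable_const _
    · filter_upwards with v
      exact (hJc.comp (continuous_id.sub continuous_const)).mul (continuous_const.sub hk)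
  have hJint_v : ∀ (k : (Fin n → ℝ) → ℝ), Continuous k → ∀ Ck : ℝ, (∀ u, |k u| ≤ Ck) → ∀ u,
      Integrable (fun v => J (u - v) * (k v - k u)) (volume.restrict Ω) := by
    intro k hk Ck hCk u
    apply integrable_of_bound' ((hJc.comp (continuous_const.sub continuous_id)).mul
      (hk.sub continuous_const)).aestronglyMeasurable (CJ * (Ck + Ck))
    filter_upwards with v
    show |J (u - v) * (k v - k u)| ≤ _; rw [abs_mul]
    exact mul_le_mul (hJbd _) ((abs_sub _ _).trans (add_le_add (hCk v) (hCk u)))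
      (abs_nonneg _) hCJ0
  have hJbd_v : ∀ (k : (Fin n → ℝ) → ℝ), ∀ Ck : ℝ, (∀ u, |k u| ≤ Ck) → ∀ u,
      |∫ v in Ω, J (u - v) * (k v - k u)| ≤ CJ * (Ck + Ck) * (volume Ω).toReal := by
    intro k Ck hCk u
    have hb : ∀ᵐ v ∂(volume.restrict Ω), ‖J (u - v) * (k v - k u)‖ ≤ CJ * (Ck + Ck) := by
      filter_upwards with v
      rw [Real.norm_eq_abs, abs_mul]
      exact mul_le_mul (hJbd _) ((abs_sub _ _).trans (add_le_add (hCk v) (hCk u)))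
        (abs_nonneg _) hCJ0
    have := norm_integral_le_of_norm_le_const (μ := volume.restrict Ω) hb
    simpa [Measure.restrict_apply_univ, Real.norm_eq_abs, Measure.real] using this
  have hgcont : ∀ s : ℝ, Continuous fun u =>
      (f (xe ε s u) (m (xe ε s u) + ηe ε s u) + ∫ v in Ω, J (u - v) * (xe ε s v - xe ε s u)) -
      (f (X s u) (m (X s u)) + ∫ v in Ω, J (u - v) * (X s v - X s u)) := by
    intro s
    apply Continuous.sub
    · exact (hf.continuous.comp ((hxet s).prodMk
        ((hmC.continuous.comp (hxet s)).add (hηt s)))).add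
        (hJcont_int _ (hxet s) Cx (fun u => (hCx s u).1))
    · exact (hf.continuous.comp ((hXt s).prodMk (hmC.continuous.comp (hXt s)))).add
        (hJcont_int _ (hXt s) CX (fun u => hCX s u))
  have hdiff1 : ∀ y : ℝ, Differentiable ℝ (fun x => f x y) :=
    fun y => (hf.differentiable one_ne_zero).comp (differentiable_id.prodMk (differentiable_const y))
  have hdiff2 : ∀ x : ℝ, Differentiable ℝ (fun y => f x y) :=
    fun x => (hf.differentiable one_ne_zero).comp ((differentiable_const x).prodMk differentiable_id)
  have hmdiff : Differentiable ℝ m := hmC.differentiable one_ne_zero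
  set φ : ℝ → ℝ := fun s => ∫ u in Ω, (xe ε s u - X s u) ^ 2 with hφdef
  set ψ : ℝ → ℝ := fun s => ∫ u in Ω, (ηe ε s u) ^ 2 with hψdef
  set g : ℝ → (Fin n → ℝ) → ℝ := fun s u =>
    (f (xe ε s u) (m (xe ε s u) + ηe ε s u) + ∫ v in Ω, J (u - v) * (xe ε s v - xe ε s u)) -
    (f (X s u) (m (X s u)) + ∫ v in Ω, J (u - v) * (X s v - X s u)) with hgdef
  set D : ℝ → ℝ := fun s => ∫ u in Ω, 2 * (xe ε s u - X s u) * g s u with hDdef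
  have hφnonneg : ∀ s, 0 ≤ φ s := fun s =>
    integral_nonneg (fun u => sq_nonneg _)
  have hφcont : Continuous φ := by
    apply continuous_of_dominated (bound := fun _ => Cw ^ 2)
    · intro s
      exact ((hwcont.comp (Continuous.prodMk_right s)).pow 2).aestronglyMeasurable
    · intro s
      filter_upwards with u
      rw [Real.norm_eq_abs, abs_pow]
      exact pow_le_pow_left₀ (abs_nonneg _) (hw_bd s u) 2
    · exact integrable_const _
    · filter_upwards with u
      exact (hwcont.comp (continuous_id.prodMk continuous_const)).pow 2
  have hφderiv : ∀ s ∈ Set.Ioo 0 T, HasDerivAt φ (D s) s := by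
    intro s hs
    obtain ⟨hs0, hsT⟩ := hs
    have hr : (0:ℝ) < min s (T - s) := lt_min hs0 (by linarith only [hsT])
    have hball : Metric.ball s (min s (T - s)) ⊆ Set.Ioo 0 T := by
      intro x hx
      rw [Metric.mem_ball, Real.dist_eq] at hx
      have h1 := abs_lt.mp hx
      have h2 : min s (T - s) ≤ s := min_le_left _ _
      have h3 : min s (T - s) ≤ T - s := min_le_right _ _
      constructor
      · linarith only [h1.1, h2]
      · linarith only [h1.2, h3]
    have key := hasDerivAt_integral_of_dominated_loc_of_deriv_le (μ := volume.restrict Ω)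
      (F := fun x u => (xe ε x u - X x u) ^ 2)
      (F' := fun x u => 2 * (xe ε x u - X x u) * g x u)
      (x₀ := s) (bound := fun _ => 2 * Cw * (2 * Cd)) (Metric.ball_mem_nhds s hr)
      (Eventually.of_forall fun x => ((hwt x).pow 2).aestronglyMeasurable)
      (integrable_of_bound' ((hwt s).pow 2).aestronglyMeasurable (Cw ^ 2)
        (Eventually.of_forall fun u => by
          rw [abs_pow]
          exact pow_le_pow_left₀ (abs_nonneg _) (hw_bd s u) 2))
      (((continuous_const.mul (hwt s)).mul
        (by simpa only [hgdef] using hgcont s)).aestronglyMeasurable)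
      ?_ (integrable_const _) ?_
    · exact key.2
    · filter_upwards [ae_restrict_mem hΩm] with u hu
      intro x hx
      have hxI : x ∈ Set.Icc 0 T := Set.Ioo_subset_Icc_self (hball hx)
      have h1 := (hCd x hxI u hu).1
      have h2 := (hCd x hxI u hu).2
      have hg : |g x u| ≤ Cd + Cd := by
        simp only [hgdef]
        exact (abs_sub _ _).trans (add_le_add h1 h2)
      rw [Real.norm_eq_abs, abs_mul, abs_mul, abs_two]
      have hCd0 : 0 ≤ Cd := le_trans (abs_nonneg _) h1
      nlinarith only [hg, hCd0, hw_bd x u, abs_nonneg (xe ε x u - X x u), abs_nonneg (g x u),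
        hCwnn]
    · filter_upwards [ae_restrict_mem hΩm] with u hu
      intro x hx
      have hxI : x ∈ Set.Ioo 0 T := hball hx
      have hdx := (hxeq ε hε x (Set.Ioo_subset_Icc_self hxI) u hu).hasDerivAt
        (Icc_mem_nhds hxI.1 hxI.2)
      have hdX := (hXeq x (Set.Ioo_subset_Icc_self hxI) u hu).hasDerivAt
        (Icc_mem_nhds hxI.1 hxI.2)
      have hdw := hdx.fun_sub hdX
      have h2 := hdw.fun_pow 2
      simp only [hgdef]
      refine h2.congr_deriv ?_
      push_cast
      ring
  have hDest : ∀ s ∈ Set.Ioo (0:ℝ) T, D s ≤ -lam * φ s + K * ψ s := by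
    intro s hs
    have hsI : s ∈ Set.Icc (0:ℝ) T := Set.Ioo_subset_Icc_self hs
    have hgC : Continuous fun u => g s u := by simpa only [hgdef] using hgcont s
    have hint_main : Integrable (fun u => 2 * (xe ε s u - X s u) * g s u)
        (volume.restrict Ω) := by
      apply integrable_of_bound' (((continuous_const.mul (hwt s)).mul hgC).aestronglyMeasurable)
        (2 * Cw * (Cd + Cd))
      filter_upwards [ae_restrict_mem hΩm] with u hu
      have h1 := (hCd s hsI u hu).1
      have h2 := (hCd s hsI u hu).2
      have hg : |g s u| ≤ Cd + Cd := by
        simp only [hgdef]; exact (abs_sub _ _).trans (add_le_add h1 h2)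
      show |2 * (xe ε s u - X s u) * g s u| ≤ _; rw [abs_mul, abs_mul, abs_two]
      have hCd0 : 0 ≤ Cd := le_trans (abs_nonneg _) h1
      nlinarith only [hg, hCd0, hw_bd s u, abs_nonneg (xe ε s u - X s u),
        abs_nonneg (g s u), hCwnn]
    have hK1 : ∀ u, Integrable (fun v => J (u - v) * (xe ε s v - xe ε s u))
        (volume.restrict Ω) := hJint_v _ (hxet s) Cx (fun u => (hCx s u).1)
    have hK2 : ∀ u, Integrable (fun v => J (u - v) * (X s v - X s u))
        (volume.restrict Ω) := hJint_v _ (hXt s) CX (fun u => hCX s u)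
    have hΔK : ∀ u, (∫ v in Ω, J (u - v) * (xe ε s v - xe ε s u)) -
        (∫ v in Ω, J (u - v) * (X s v - X s u)) =
        ∫ v in Ω, J (u - v) * ((xe ε s v - X s v) - (xe ε s u - X s u)) := by
      intro u
      rw [← integral_sub (hK1 u) (hK2 u)]
      congr 1
      funext v
      ring
    set KK : (Fin n → ℝ) → ℝ :=
      fun u => ∫ v in Ω, J (u - v) * ((xe ε s v - X s v) - (xe ε s u - X s u)) with hKKdef
    have hKwcont : Continuous KK := hJcont_int _ (hwt s) Cw (hw_bd s)
    have hKw_bd : ∀ u, |KK u| ≤ CJ * (Cw + Cw) * (volume Ω).toReal :=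
      hJbd_v _ Cw (hw_bd s)
    have hKw_bd0 : 0 ≤ CJ * (Cw + Cw) * (volume Ω).toReal :=
      le_trans (abs_nonneg _) (hKw_bd 0)
    have hintB : Integrable (fun u => 2 * (xe ε s u - X s u) * KK u) (volume.restrict Ω) := by
      apply integrable_of_bound' ((continuous_const.mul (hwt s)).mul hKwcont).aestronglyMeasurable
        (2 * Cw * (CJ * (Cw + Cw) * (volume Ω).toReal))
      filter_upwards with u
      show |2 * (xe ε s u - X s u) * KK u| ≤ _; rw [abs_mul, abs_mul, abs_two]
      nlinarith only [hKw_bd u, hw_bd s u, abs_nonneg (xe ε s u - X s u), abs_nonneg (KK u),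
        hCwnn, hKw_bd0]
    have heqfun : (fun u => 2 * (xe ε s u - X s u) *
        (f (xe ε s u) (m (xe ε s u) + ηe ε s u) - f (X s u) (m (X s u)))) =
        fun u => 2 * (xe ε s u - X s u) * g s u - 2 * (xe ε s u - X s u) * KK u := by
      funext u
      simp only [hgdef, hKKdef]
      rw [← hΔK u]
      ring
    have hintA : Integrable (fun u => 2 * (xe ε s u - X s u) *
        (f (xe ε s u) (m (xe ε s u) + ηe ε s u) - f (X s u) (m (X s u))))
        (volume.restrict Ω) := by
      rw [heqfun]
      exact hint_main.sub hintB
    have hsum : (∫ u in Ω, (2 * (xe ε s u - X s u) *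
        (f (xe ε s u) (m (xe ε s u) + ηe ε s u) - f (X s u) (m (X s u))) +
        2 * (xe ε s u - X s u) * KK u)) =
        (∫ u in Ω, 2 * (xe ε s u - X s u) *
          (f (xe ε s u) (m (xe ε s u) + ηe ε s u) - f (X s u) (m (X s u)))) +
        ∫ u in Ω, 2 * (xe ε s u - X s u) * KK u := integral_add hintA hintB
    have hDsplit : D s = (∫ u in Ω, 2 * (xe ε s u - X s u) *
        (f (xe ε s u) (m (xe ε s u) + ηe ε s u) - f (X s u) (m (X s u)))) +
        ∫ u in Ω, 2 * (xe ε s u - X s u) * KK u := by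
      rw [← hsum]
      simp only [hDdef]
      congr 1
      funext u
      simp only [hgdef, hKKdef]
      rw [← hΔK u]
      ring
    have i1 : Integrable (fun u => (xe ε s u - X s u) ^ 2) (volume.restrict Ω) :=
      integrable_of_bound' ((hwt s).pow 2).aestronglyMeasurable (Cw ^ 2)
        (Eventually.of_forall fun u => by
          rw [abs_pow]; exact pow_le_pow_left₀ (abs_nonneg _) (hw_bd s u) 2)
    have i2 : Integrable (fun u => (ηe ε s u) ^ 2) (volume.restrict Ω) :=
      integrable_of_bound' ((hηt s).pow 2).aestronglyMeasurable (Cx ^ 2)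
        (Eventually.of_forall fun u => by
          rw [abs_pow]; exact pow_le_pow_left₀ (abs_nonneg _) ((hCx s u).2) 2)
    have hintR : Integrable (fun u => -lam * (xe ε s u - X s u) ^ 2 + K * (ηe ε s u) ^ 2)
        (volume.restrict Ω) := (i1.const_mul _).add (i2.const_mul _)
    have hpart1 : (∫ u in Ω, 2 * (xe ε s u - X s u) *
        (f (xe ε s u) (m (xe ε s u) + ηe ε s u) - f (X s u) (m (X s u)))) ≤
        ∫ u in Ω, (-lam * (xe ε s u - X s u) ^ 2 + K * (ηe ε s u) ^ 2) := by
      apply integral_mono hintA hintR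
      intro u
      apply pointwise_est hβN hlamdef hlam hKdef
      · exact one_sided_lip (hdiff1 _) (fun x => hfx x _) _ _
      · have hl1 := lip_of_deriv_bounds (hdiff2 (X s u)) (fun y => (hfy (X s u) y).1)
          (fun y => (hfy (X s u) y).2) (m (xe ε s u) + ηe ε s u) (m (X s u))
        have hl2 := lip_of_deriv_bounds hmdiff (fun y => (hm' y).1) (fun y => (hm' y).2)
          (xe ε s u) (X s u)
        calc |f (X s u) (m (xe ε s u) + ηe ε s u) - f (X s u) (m (X s u))| ≤
            β * N * |m (xe ε s u) + ηe ε s u - m (X s u)| := hl1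
          _ ≤ β * N * (|m (xe ε s u) - m (X s u)| + |ηe ε s u|) := by
              apply mul_le_mul_of_nonneg_left _ hβN.le
              calc |m (xe ε s u) + ηe ε s u - m (X s u)| =
                  |(m (xe ε s u) - m (X s u)) + ηe ε s u| := by ring_nf
                _ ≤ |m (xe ε s u) - m (X s u)| + |ηe ε s u| := abs_add_le _ _
          _ ≤ β * N * (γ * M / δ * |xe ε s u - X s u| + |ηe ε s u|) := by
              exact mul_le_mul_of_nonneg_left (add_le_add hl2 le_rfl) hβN.le
    have hRHS : (∫ u in Ω, (-lam * (xe ε s u - X s u) ^ 2 + K * (ηe ε s u) ^ 2)) =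
        -lam * φ s + K * ψ s := by
      calc (∫ u in Ω, (-lam * (xe ε s u - X s u) ^ 2 + K * (ηe ε s u) ^ 2)) =
          (∫ u in Ω, -lam * (xe ε s u - X s u) ^ 2) + ∫ u in Ω, K * (ηe ε s u) ^ 2 :=
            integral_add (i1.const_mul _) (i2.const_mul _)
        _ = -lam * (∫ u in Ω, (xe ε s u - X s u) ^ 2) + K * ∫ u in Ω, (ηe ε s u) ^ 2 := by
            rw [integral_const_mul, integral_const_mul]
        _ = -lam * φ s + K * ψ s := by simp only [hφdef, hψdef]
    -- Part 2: the nonlocal term is nonpositive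
    have hpart2 : (∫ u in Ω, 2 * (xe ε s u - X s u) * KK u) ≤ 0 := by
      have hPint : ∀ (F : ((Fin n → ℝ) × (Fin n → ℝ)) → ℝ), Continuous F → ∀ CF : ℝ,
          (∀ p, |F p| ≤ CF) →
          Integrable F ((volume.restrict Ω).prod (volume.restrict Ω)) :=
        fun F hF CF hCF => integrable_of_bound' hF.aestronglyMeasurable CF (ae_of_all _ hCF)
      have hw1c : Continuous fun p : (Fin n → ℝ) × (Fin n → ℝ) => xe ε s p.1 - X s p.1 :=
        (hwt s).comp continuous_fst
      have hw2c : Continuous fun p : (Fin n → ℝ) × (Fin n → ℝ) => xe ε s p.2 - X s p.2 :=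
        (hwt s).comp continuous_snd
      have hJpc : Continuous fun p : (Fin n → ℝ) × (Fin n → ℝ) => J (p.1 - p.2) :=
        hJc.comp (continuous_fst.sub continuous_snd)
      have hHc : Continuous fun p : (Fin n → ℝ) × (Fin n → ℝ) =>
          J (p.1 - p.2) * ((xe ε s p.1 - X s p.1) * (xe ε s p.2 - X s p.2)) -
          J (p.1 - p.2) * (xe ε s p.1 - X s p.1) ^ 2 :=
        (hJpc.mul (hw1c.mul hw2c)).sub (hJpc.mul (hw1c.pow 2))
      have habs : ∀ p : (Fin n → ℝ) × (Fin n → ℝ),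
          |J (p.1 - p.2) * ((xe ε s p.1 - X s p.1) * (xe ε s p.2 - X s p.2)) -
            J (p.1 - p.2) * (xe ε s p.1 - X s p.1) ^ 2| ≤ CJ * (Cw * Cw) + CJ * Cw ^ 2 := by
        intro p
        have e1 : |J (p.1 - p.2) * ((xe ε s p.1 - X s p.1) * (xe ε s p.2 - X s p.2))| ≤
            CJ * (Cw * Cw) := by
          rw [abs_mul, abs_mul]
          exact mul_le_mul (hJbd _) (mul_le_mul (hw_bd s p.1) (hw_bd s p.2) (abs_nonneg _)
            hCwnn) (mul_nonneg (abs_nonneg _) (abs_nonneg _)) hCJ0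
        have e2 : |J (p.1 - p.2) * (xe ε s p.1 - X s p.1) ^ 2| ≤ CJ * Cw ^ 2 := by
          rw [abs_mul, abs_pow]
          exact mul_le_mul (hJbd _) (pow_le_pow_left₀ (abs_nonneg _) (hw_bd s p.1) 2)
            (by positivity) hCJ0
        exact (abs_sub _ _).trans (add_le_add e1 e2)
      have hHP := hPint _ hHc _ habs
      have hR1c : Continuous fun p : (Fin n → ℝ) × (Fin n → ℝ) =>
          J (p.1 - p.2) * (xe ε s p.2 - X s p.2) ^ 2 := hJpc.mul (hw2c.pow 2)
      have hR2c : Continuous fun p : (Fin n → ℝ) × (Fin n → ℝ) =>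
          J (p.1 - p.2) * (xe ε s p.1 - X s p.1) ^ 2 := hJpc.mul (hw1c.pow 2)
      have hRabs : ∀ (y : (Fin n → ℝ)) (z : Fin n → ℝ),
          |J (y - z) * (xe ε s z - X s z) ^ 2| ≤ CJ * Cw ^ 2 := by
        intro y z
        rw [abs_mul, abs_pow]
        exact mul_le_mul (hJbd _) (pow_le_pow_left₀ (abs_nonneg _) (hw_bd s z) 2)
          (by positivity) hCJ0
      have hR1P := hPint _ hR1c (CJ * Cw ^ 2) (fun p => hRabs p.1 p.2)
      have hR2P := hPint _ hR2c (CJ * Cw ^ 2) (fun p => by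
        have := hRabs p.1 p.1
        rw [abs_mul, abs_pow]
        exact mul_le_mul (hJbd _) (pow_le_pow_left₀ (abs_nonneg _) (hw_bd s p.1) 2)
          (by positivity) hCJ0)
      have step2 : ∀ u, (xe ε s u - X s u) * KK u =
          ∫ v in Ω, (J (u - v) * ((xe ε s u - X s u) * (xe ε s v - X s v)) -
            J (u - v) * (xe ε s u - X s u) ^ 2) := by
        intro u
        calc (xe ε s u - X s u) * KK u =
            ∫ v in Ω, (xe ε s u - X s u) *
              (J (u - v) * ((xe ε s v - X s v) - (xe ε s u - X s u))) := by
              simp only [hKKdef]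
              exact (integral_const_mul _ _).symm
          _ = ∫ v in Ω, (J (u - v) * ((xe ε s u - X s u) * (xe ε s v - X s v)) -
              J (u - v) * (xe ε s u - X s u) ^ 2) := by
              congr 1
              funext v
              ring
      have step3 : (∫ u in Ω, (xe ε s u - X s u) * KK u) =
          ∫ u in Ω, ∫ v in Ω, (J (u - v) * ((xe ε s u - X s u) * (xe ε s v - X s v)) -
            J (u - v) * (xe ε s u - X s u) ^ 2) := by
        congr 1
        funext u
        exact step2 u
      have hHunc : Integrable (Function.uncurry fun u v =>
          J (u - v) * ((xe ε s u - X s u) * (xe ε s v - X s v)) -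
          J (u - v) * (xe ε s u - X s u) ^ 2)
          ((volume.restrict Ω).prod (volume.restrict Ω)) := hHP
      have step4 : (∫ u in Ω, ∫ v in Ω,
          (J (u - v) * ((xe ε s u - X s u) * (xe ε s v - X s v)) -
            J (u - v) * (xe ε s u - X s u) ^ 2)) =
          ∫ p, (J (p.1 - p.2) * ((xe ε s p.1 - X s p.1) * (xe ε s p.2 - X s p.2)) -
            J (p.1 - p.2) * (xe ε s p.1 - X s p.1) ^ 2)
            ∂((volume.restrict Ω).prod (volume.restrict Ω)) :=
        MeasureTheory.integral_integral hHunc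
      have hQP : Integrable (fun p : (Fin n → ℝ) × (Fin n → ℝ) =>
          (1/2) * (J (p.1 - p.2) * (xe ε s p.2 - X s p.2) ^ 2) -
          (1/2) * (J (p.1 - p.2) * (xe ε s p.1 - X s p.1) ^ 2))
          ((volume.restrict Ω).prod (volume.restrict Ω)) :=
        (hR1P.const_mul _).sub (hR2P.const_mul _)
      have step5 : (∫ p, (J (p.1 - p.2) * ((xe ε s p.1 - X s p.1) * (xe ε s p.2 - X s p.2)) -
            J (p.1 - p.2) * (xe ε s p.1 - X s p.1) ^ 2)
            ∂((volume.restrict Ω).prod (volume.restrict Ω))) ≤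
          ∫ p, ((1/2) * (J (p.1 - p.2) * (xe ε s p.2 - X s p.2) ^ 2) -
            (1/2) * (J (p.1 - p.2) * (xe ε s p.1 - X s p.1) ^ 2))
            ∂((volume.restrict Ω).prod (volume.restrict Ω)) := by
        apply integral_mono hHP hQP
        intro p
        have hh := mul_nonneg (hJnn (p.1 - p.2))
          (sq_nonneg ((xe ε s p.1 - X s p.1) - (xe ε s p.2 - X s p.2)))
        nlinarith only [hh]
      have hR1unc : Integrable (Function.uncurry fun u v =>
          J (u - v) * (xe ε s v - X s v) ^ 2)
          ((volume.restrict Ω).prod (volume.restrict Ω)) := hR1P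
      have hR2unc : Integrable (Function.uncurry fun u v =>
          J (u - v) * (xe ε s u - X s u) ^ 2)
          ((volume.restrict Ω).prod (volume.restrict Ω)) := hR2P
      have hsymJ : ∀ y z : Fin n → ℝ, J (y - z) = J (z - y) := by
        intro y z
        rw [← hJsym (z - y), neg_sub]
      have lhs_eq : (∫ v in Ω, ∫ u in Ω, J (u - v) * (xe ε s v - X s v) ^ 2) =
          ∫ v in Ω, (∫ u in Ω, J (v - u)) * (xe ε s v - X s v) ^ 2 := by
        congr 1
        funext v
        calc (∫ u in Ω, J (u - v) * (xe ε s v - X s v) ^ 2) =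
            (∫ u in Ω, J (u - v)) * (xe ε s v - X s v) ^ 2 := integral_mul_const _ _
          _ = (∫ u in Ω, J (v - u)) * (xe ε s v - X s v) ^ 2 := by
              congr 1
              congr 1
              funext u
              exact hsymJ u v
      have rhs_eq : (∫ u in Ω, ∫ v in Ω, J (u - v) * (xe ε s u - X s u) ^ 2) =
          ∫ u in Ω, (∫ v in Ω, J (u - v)) * (xe ε s u - X s u) ^ 2 := by
        congr 1
        funext u
        exact integral_mul_const _ _
      have hRR : (∫ p, (J (p.1 - p.2) * (xe ε s p.2 - X s p.2) ^ 2)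
            ∂((volume.restrict Ω).prod (volume.restrict Ω))) =
          ∫ p, (J (p.1 - p.2) * (xe ε s p.1 - X s p.1) ^ 2)
            ∂((volume.restrict Ω).prod (volume.restrict Ω)) := by
        calc (∫ p, (J (p.1 - p.2) * (xe ε s p.2 - X s p.2) ^ 2)
              ∂((volume.restrict Ω).prod (volume.restrict Ω))) =
            ∫ u in Ω, ∫ v in Ω, J (u - v) * (xe ε s v - X s v) ^ 2 :=
              (MeasureTheory.integral_integral hR1unc).symm
          _ = ∫ v in Ω, ∫ u in Ω, J (u - v) * (xe ε s v - X s v) ^ 2 :=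
              MeasureTheory.integral_integral_swap hR1unc
          _ = ∫ v in Ω, (∫ u in Ω, J (v - u)) * (xe ε s v - X s v) ^ 2 := lhs_eq
          _ = ∫ u in Ω, (∫ v in Ω, J (u - v)) * (xe ε s u - X s u) ^ 2 := rfl
          _ = ∫ u in Ω, ∫ v in Ω, J (u - v) * (xe ε s u - X s u) ^ 2 := rhs_eq.symm
          _ = ∫ p, (J (p.1 - p.2) * (xe ε s p.1 - X s p.1) ^ 2)
              ∂((volume.restrict Ω).prod (volume.restrict Ω)) :=
              MeasureTheory.integral_integral hR2unc
      have step6 : (∫ p, ((1/2) * (J (p.1 - p.2) * (xe ε s p.2 - X s p.2) ^ 2) -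
            (1/2) * (J (p.1 - p.2) * (xe ε s p.1 - X s p.1) ^ 2))
            ∂((volume.restrict Ω).prod (volume.restrict Ω))) = 0 := by
        calc (∫ p, ((1/2) * (J (p.1 - p.2) * (xe ε s p.2 - X s p.2) ^ 2) -
              (1/2) * (J (p.1 - p.2) * (xe ε s p.1 - X s p.1) ^ 2))
              ∂((volume.restrict Ω).prod (volume.restrict Ω))) =
            (∫ p, (1/2) * (J (p.1 - p.2) * (xe ε s p.2 - X s p.2) ^ 2)
              ∂((volume.restrict Ω).prod (volume.restrict Ω))) -
            ∫ p, (1/2) * (J (p.1 - p.2) * (xe ε s p.1 - X s p.1) ^ 2)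
              ∂((volume.restrict Ω).prod (volume.restrict Ω)) :=
              integral_sub (hR1P.const_mul _) (hR2P.const_mul _)
          _ = (1/2) * (∫ p, (J (p.1 - p.2) * (xe ε s p.2 - X s p.2) ^ 2)
              ∂((volume.restrict Ω).prod (volume.restrict Ω))) -
            (1/2) * ∫ p, (J (p.1 - p.2) * (xe ε s p.1 - X s p.1) ^ 2)
              ∂((volume.restrict Ω).prod (volume.restrict Ω)) := by
              rw [integral_const_mul, integral_const_mul]
          _ = 0 := by rw [hRR]; ring
      have step1 : (∫ u in Ω, 2 * (xe ε s u - X s u) * KK u) =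
          2 * ∫ u in Ω, (xe ε s u - X s u) * KK u := by
        calc (∫ u in Ω, 2 * (xe ε s u - X s u) * KK u) =
            ∫ u in Ω, 2 * ((xe ε s u - X s u) * KK u) := by
              congr 1
              funext u
              ring
          _ = 2 * ∫ u in Ω, (xe ε s u - X s u) * KK u := integral_const_mul _ _
      rw [step1]
      have hfinal : (∫ u in Ω, (xe ε s u - X s u) * KK u) ≤ 0 := by
        rw [step3, step4]
        exact step5.trans (le_of_eq step6)
      linarith only [hfinal]
    linarith only [hDsplit, hpart1, hpart2, hRHS]
  have hε1 : ε ≤ 1 := le_of_lt (lt_of_lt_of_le hεlt (min_le_left _ _))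
  have hεδ : ε < δ / (2 * lam) := lt_of_lt_of_le hεlt (min_le_right _ _)
  have hψest : ∀ s ∈ Set.Icc (0:ℝ) T, ψ s ≤ ε * A + Real.exp (-s * δ / ε) * B ^ 2 := by
    intro s hs
    have hdec := hηdec ε hε s hs
    have hexple : Real.exp (-s * δ / ε) ≤ 1 := by
      apply Real.exp_le_one_iff.mpr
      have h0 : (0:ℝ) ≤ s * δ / ε := div_nonneg (mul_nonneg hs.1 hδ.le) hε.le
      have : -s * δ / ε = -(s * δ / ε) := by ring
      rw [this]; linarith only [h0]
    have hexppos : 0 < Real.exp (-s * δ / ε) := Real.exp_pos _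
    have hψ0nn : (0:ℝ) ≤ ∫ u in Ω, (ηe ε 0 u) ^ 2 := integral_nonneg fun u => sq_nonneg _
    have hψ0B : (∫ u in Ω, (ηe ε 0 u) ^ 2) ≤ B ^ 2 := by
      nlinarith only [Real.sq_sqrt hψ0nn, Real.sqrt_nonneg (∫ u in Ω, (ηe ε 0 u) ^ 2), hB ε hε, hB0]
    have h3 : ε / (2 * δ) * D₀ ^ 2 ≤ D₀ ^ 2 / (2 * δ) := by
      rw [div_mul_eq_mul_div, div_le_div_iff₀ (by positivity) (by positivity)]
      nlinarith only [sq_nonneg D₀, hδ, hε1, mul_nonneg (sq_nonneg D₀) hδ.le]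
    have h2 : ε / δ * (ε / (2 * δ) * D₀ ^ 2 + D₁) ≤ ε * A := by
      have heq : ε / δ * (ε / (2 * δ) * D₀ ^ 2 + D₁) =
          ε * ((ε / (2 * δ) * D₀ ^ 2 + D₁) / δ) := by ring
      rw [heq, hAdef]
      apply mul_le_mul_of_nonneg_left _ hε.le
      apply (div_le_div_iff_of_pos_right hδ).mpr
      linarith only [h3]
    have hst : (0:ℝ) ≤ ε / δ * (ε / (2 * δ) * D₀ ^ 2 + D₁) := by positivity
    show (∫ u in Ω, (ηe ε s u) ^ 2) ≤ _
    calc (∫ u in Ω, (ηe ε s u) ^ 2) ≤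
        ε / δ * (ε / (2 * δ) * D₀ ^ 2 + D₁) * (1 - Real.exp (-s * δ / ε)) +
          Real.exp (-s * δ / ε) * ∫ u in Ω, (ηe ε 0 u) ^ 2 := hdec
      _ ≤ ε * A + Real.exp (-s * δ / ε) * B ^ 2 := by
          have h5 := mul_le_mul_of_nonneg_left hψ0B hexppos.le
          nlinarith only [hst, hexple, hexppos, h2, h5]
  clear_value φ ψ g D
  have hgron : ∀ s ∈ Set.Icc (0:ℝ) T, Real.exp (lam * s) * φ s ≤
      φ 0 + ∫ r in (0:ℝ)..s, Real.exp (lam * r) *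
        (K * (ε * A) + K * B ^ 2 * Real.exp (-r * δ / ε)) := by
    have hfc : Continuous fun r : ℝ =>
        Real.exp (lam * r) * (K * (ε * A) + K * B ^ 2 * Real.exp (-r * δ / ε)) := by fun_prop
    set I : ℝ → ℝ := fun s => ∫ r in (0:ℝ)..s, Real.exp (lam * r) *
        (K * (ε * A) + K * B ^ 2 * Real.exp (-r * δ / ε)) with hIdef
    have hI : ∀ s : ℝ, HasDerivAt I
        (Real.exp (lam * s) * (K * (ε * A) + K * B ^ 2 * Real.exp (-s * δ / ε))) s :=
      fun s => (hfc.integral_hasStrictDerivAt 0 s).hasDerivAt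
    set G : ℝ → ℝ := fun s => Real.exp (lam * s) * φ s - I s with hGdef
    have hexpD : ∀ s : ℝ, HasDerivAt (fun r => Real.exp (lam * r))
        (Real.exp (lam * s) * lam) s := fun s => by
      simpa using HasDerivAt.exp ((hasDerivAt_id s).const_mul lam)
    have hGd : ∀ s ∈ Set.Ioo (0:ℝ) T, HasDerivAt G
        (Real.exp (lam * s) * lam * φ s + Real.exp (lam * s) * D s -
          Real.exp (lam * s) * (K * (ε * A) + K * B ^ 2 * Real.exp (-s * δ / ε))) s := by
      intro s hs
      exact ((hexpD s).mul (hφderiv s hs)).sub (hI s)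
    have hIcont : Continuous I := by
      have : Differentiable ℝ I := fun s => (hI s).differentiableAt
      exact this.continuous
    have hGanti : AntitoneOn G (Set.Icc 0 T) := by
      apply antitoneOn_of_deriv_nonpos (convex_Icc 0 T)
      · exact (((by fun_prop : Continuous fun s : ℝ => Real.exp (lam * s)).mul
          hφcont).sub hIcont).continuousOn
      · rw [interior_Icc]
        exact fun s hs => ((hGd s hs).differentiableAt).differentiableWithinAt
      · rw [interior_Icc]
        intro s hs
        rw [(hGd s hs).deriv]
        have h1 := hDest s hs
        have h2 := hψest s (Set.Ioo_subset_Icc_self hs)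
        have hep := Real.exp_pos (lam * s)
        have h3 : lam * φ s + D s ≤ K * ψ s := by linarith only [h1]
        have h4 : K * ψ s ≤ K * (ε * A) + K * B ^ 2 * Real.exp (-s * δ / ε) := by
          have h4' := mul_le_mul_of_nonneg_left h2 hK.le
          nlinarith only [h4']
        have h5 : lam * φ s + D s -
            (K * (ε * A) + K * B ^ 2 * Real.exp (-s * δ / ε)) ≤ 0 := by
          linarith only [h3, h4]
        have h6 := mul_le_mul_of_nonneg_left h5 hep.le
        nlinarith only [h6]
    have hG0 : G 0 = φ 0 := by
      simp [hGdef, hIdef, intervalIntegral.integral_same]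
    have hGs_eq : ∀ s : ℝ, G s = Real.exp (lam * s) * φ s - I s := fun s => by rw [hGdef]
    have hIs_eq : ∀ s : ℝ, I s = ∫ r in (0:ℝ)..s, Real.exp (lam * r) *
        (K * (ε * A) + K * B ^ 2 * Real.exp (-r * δ / ε)) := fun s => by rw [hIdef]
    clear_value I G
    intro s hs
    have h10 := hGanti (Set.left_mem_Icc.mpr hT.le) hs hs.1
    rw [hGs_eq s, hG0, hIs_eq s] at h10
    linarith only [h10]
  -- evaluate the forcing integral and conclude
  have hc : lam - δ / ε < -lam := by
    have : 2 * lam < δ / ε := by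
      rw [lt_div_iff₀ hε]
      calc 2 * lam * ε = ε * (2 * lam) := by ring
      _ < δ / (2 * lam) * (2 * lam) := by
          apply mul_lt_mul_of_pos_right hεδ (by positivity)
      _ = δ := by field_simp
    linarith only [this, hlam]
  have hcne : lam - δ / ε ≠ 0 := by
    intro hq
    rw [hq] at hc
    linarith only [hc, hlam]
  have hIeval : (∫ r in (0:ℝ)..t, Real.exp (lam * r) *
      (K * (ε * A) + K * B ^ 2 * Real.exp (-r * δ / ε))) =
      K * (ε * A) * ((Real.exp (lam * t) - 1) / lam) +
      K * B ^ 2 * ((Real.exp ((lam - δ / ε) * t) - 1) / (lam - δ / ε)) := by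
    have heq : ∀ r : ℝ, Real.exp (lam * r) * (K * (ε * A) + K * B ^ 2 * Real.exp (-r * δ / ε)) =
        K * (ε * A) * Real.exp (lam * r) + K * B ^ 2 * Real.exp ((lam - δ / ε) * r) := by
      intro r
      have : (lam - δ / ε) * r = lam * r + -r * δ / ε := by ring
      rw [this, Real.exp_add]; ring
    rw [intervalIntegral.integral_congr (g := fun r =>
        K * (ε * A) * Real.exp (lam * r) + K * B ^ 2 * Real.exp ((lam - δ / ε) * r))
        (fun r _ => heq r)]
    rw [intervalIntegral.integral_add
        (((by fun_prop : Continuous fun r : ℝ => K * (ε * A) * Real.exp (lam * r))).intervalIntegrable _ _)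
        (((by fun_prop : Continuous fun r : ℝ => K * B ^ 2 * Real.exp ((lam - δ / ε) * r))).intervalIntegrable _ _),
      intervalIntegral.integral_const_mul, intervalIntegral.integral_const_mul,
      integral_exp_mul lam (ne_of_gt hlam) t, integral_exp_mul _ hcne t]
  have ht0 := ht.1
  have htT := ht.2
  have hmain := hgron t ht
  rw [hIeval] at hmain
  have hterm2 : K * B ^ 2 * ((Real.exp ((lam - δ / ε) * t) - 1) / (lam - δ / ε)) ≤
      K * B ^ 2 * (2 * ε / δ) := by
    apply mul_le_mul_of_nonneg_left _ (by positivity)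
    have hcneg : lam - δ / ε < 0 := by linarith only [hc, hlam]
    have hexpct : Real.exp ((lam - δ / ε) * t) ≤ 1 := by
      apply Real.exp_le_one_iff.mpr
      exact mul_nonpos_of_nonpos_of_nonneg hcneg.le ht0
    have h1 : (Real.exp ((lam - δ / ε) * t) - 1) / (lam - δ / ε) =
        (1 - Real.exp ((lam - δ / ε) * t)) / (δ / ε - lam) := by
      rw [div_eq_div_iff (by linarith only [hc, hlam]) (by linarith only [hc, hlam])]; ring
    rw [h1]
    have hden : δ / (2 * ε) ≤ δ / ε - lam := by
      have hlamle : lam ≤ δ / (2 * ε) := by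
        rw [le_div_iff₀ (by positivity)]
        have := (lt_div_iff₀ (by positivity : (0:ℝ) < 2 * lam)).mp hεδ
        nlinarith only [this, hε, hlam]
      have h6 : δ / ε = 2 * (δ / (2 * ε)) := by field_simp
      linarith only [hlamle, h6]
    have hdenpos : (0:ℝ) < δ / (2 * ε) := by positivity
    calc (1 - Real.exp ((lam - δ / ε) * t)) / (δ / ε - lam) ≤ 1 / (δ / ε - lam) := by
          apply (div_le_div_iff_of_pos_right (by linarith only [hc, hlam] : (0:ℝ) < δ / ε - lam)).mpr
          linarith only [Real.exp_pos ((lam - δ / ε) * t)]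
      _ ≤ 2 * ε / δ := by
          rw [div_le_div_iff₀ (by linarith only [hc, hlam]) (by positivity)]
          have h7 : 2 * ε * (δ / (2 * ε)) = δ := by field_simp
          have h8 := mul_le_mul_of_nonneg_left hden (by positivity : (0:ℝ) ≤ 2 * ε)
          nlinarith only [h7, h8]
  have he1 : Real.exp (lam * t) ≤ Real.exp (lam * T) :=
    Real.exp_le_exp.mpr (mul_le_mul_of_nonneg_left htT hlam.le)
  have hterm1 : K * (ε * A) * ((Real.exp (lam * t) - 1) / lam) ≤
      ε * (Real.exp (lam * T) * K * A / lam) := by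
    have h9 : (Real.exp (lam * t) - 1) / lam ≤ Real.exp (lam * T) / lam :=
      (div_le_div_iff_of_pos_right hlam).mpr (by linarith only [he1])
    calc K * (ε * A) * ((Real.exp (lam * t) - 1) / lam) ≤
        K * (ε * A) * (Real.exp (lam * T) / lam) :=
          mul_le_mul_of_nonneg_left h9 (by positivity)
      _ = ε * (Real.exp (lam * T) * K * A / lam) := by ring
  have hfin : Real.exp (lam * t) * φ t ≤
      φ 0 + ε * (Real.exp (lam * T) * K * A / lam + 2 * K * B ^ 2 / δ + 1) := by
    have hr1 : K * B ^ 2 * (2 * ε / δ) = ε * (2 * K * B ^ 2 / δ) := by ring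
    linarith only [hmain, hterm1, hterm2, hr1, hε]
  have hφt : (∫ u in Ω, (xe ε t u - X t u) ^ 2) = φ t := by rw [hφdef]
  have hφ0 : (∫ u in Ω, (xe ε 0 u - X 0 u) ^ 2) = φ 0 := by rw [hφdef]
  rw [hφt, hφ0, show (-lam * t : ℝ) = -(lam * t) by ring, Real.exp_neg,
    inv_mul_eq_div, le_div_iff₀ (Real.exp_pos _)]
  nlinarith only [hfin]
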